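/- For every x ∈ (0, π/2) and every positive integer n, Σ_{k=2}^{2n} (-1)^{k+1} B(k) x^{2k} < sin x / x - (cos x + 2)/3 < Σ_{k=2}^{2n+1} (-1)^{k+1} B(k) x^{2k}. -/

import Mathlib

open Real Finset Filter Topology

/-- The coefficient `B(k) = (2/3)·(k-1)/(2k+1)!`. -/
noncomputable def wchB (k : ℕ) : ℝ :=
  (2 / 3) * ((k : ℝ) - 1) / (Nat.factorial (2 * k + 1) : ℝ)

lemma wchB_decr (x : ℝ) (hx0 : 0 < x) (hx : x < π / 2) (k : ℕ) (hk : 2 ≤ k) :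
    wchB (k + 1) * x ^ (2 * (k + 1)) < wchB k * x ^ (2 * k) := by
  have hx2 : x ^ 2 < 4 := by nlinarith [Real.pi_lt_d2]
  have hfac : ((2 * (k + 1) + 1).factorial : ℝ)
      = ((2 * k + 2) * (2 * k + 3)) * (2 * k + 1).factorial := by
    have : 2 * (k + 1) + 1 = (2 * k + 1) + 1 + 1 := by ring
    rw [this, Nat.factorial_succ, Nat.factorial_succ]; push_cast; ring
  have h1 : (0:ℝ) < (2 * k + 1).factorial := by positivity
  have hk' : (2:ℝ) ≤ (k:ℝ) := by exact_mod_cast hk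
  have hB : wchB (k + 1) * 4 < wchB k := by
    rw [wchB, wchB, hfac]
    rw [div_mul_eq_mul_div, div_lt_div_iff₀ (by positivity) h1]
    push_cast
    have key : 2 / 3 * ((k:ℝ) + 1 - 1) * 4 < 2 / 3 * ((k:ℝ) - 1) * ((2 * k + 2) * (2 * k + 3)) := by
      nlinarith [sq_nonneg ((k:ℝ) - 2), mul_nonneg (sub_nonneg.2 hk') (sub_nonneg.2 hk')]
    nlinarith [mul_lt_mul_of_pos_right key h1]
  have hxp : (0:ℝ) < x ^ (2 * k) := by positivity
  have hBpos : 0 < wchB (k + 1) := by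
    rw [wchB]
    apply div_pos _ (by positivity)
    push_cast; nlinarith
  calc wchB (k + 1) * x ^ (2 * (k + 1)) = (wchB (k + 1) * x ^ 2) * x ^ (2 * k) := by ring
    _ < (wchB (k + 1) * 4) * x ^ (2 * k) := mul_lt_mul_of_pos_right (by nlinarith) hxp
    _ < wchB k * x ^ (2 * k) := mul_lt_mul_of_pos_right hB hxp

lemma wchB_hasSum (x : ℝ) (hx : x ≠ 0) :
    HasSum (fun k : ℕ => (-1 : ℝ) ^ (k + 1) * wchB k * x ^ (2 * k))
      (Real.sin x / x - Real.cos x / 3) := by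
  have hs := (Real.hasSum_sin x).div_const x
  have hc := (Real.hasSum_cos x).div_const 3
  have h := hs.sub hc
  convert h using 2 with k
  · rfl
  have hfac : ((2 * k + 1).factorial : ℝ) = (2 * k + 1) * (2 * k).factorial := by
    rw [Nat.factorial_succ]; push_cast; ring
  have h1 : ((2 * k).factorial : ℝ) ≠ 0 := Nat.cast_ne_zero.2 (Nat.factorial_ne_zero _)
  have h2 : ((2 * k + 1) : ℝ) ≠ 0 := by positivity
  rw [wchB, hfac, pow_succ]
  field_simp
  ring

theorem sinx_div_x_sub_cos_bounds :
    ∀ x ∈ Set.Ioo (0 : ℝ) (π / 2), ∀ n : ℕ, 1 ≤ n →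
      (∑ k ∈ Finset.Icc 2 (2 * n), (-1 : ℝ) ^ (k + 1) * wchB k * x ^ (2 * k))
          < Real.sin x / x - (Real.cos x + 2) / 3 ∧
      Real.sin x / x - (Real.cos x + 2) / 3
          < ∑ k ∈ Finset.Icc 2 (2 * n + 1), (-1 : ℝ) ^ (k + 1) * wchB k * x ^ (2 * k) := by
  intro x hx n hn
  obtain ⟨hx0, hxpi⟩ := hx
  set F : ℕ → ℝ := fun k => (-1 : ℝ) ^ (k + 1) * wchB k * x ^ (2 * k) with hF
  set a : ℕ → ℝ := fun i => wchB (i + 2) * x ^ (2 * (i + 2)) with ha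
  set l : ℝ := (Real.cos x + 2) / 3 - Real.sin x / x with hl
  have hFa : ∀ i : ℕ, F (2 + i) = -((-1 : ℝ) ^ i * a i) := by
    intro i
    have h1 : 2 + i = i + 2 := by omega
    simp only [hF, ha, h1, pow_add]
    ring
  -- the shifted series
  have hsum := wchB_hasSum x (ne_of_gt hx0)
  have hc2 : ∑ i ∈ range 2, F i = 2 / 3 := by
    simp [hF, Finset.sum_range_succ, wchB]
  have hshift : HasSum (fun i => F (i + 2)) (Real.sin x / x - Real.cos x / 3 - 2 / 3) := by
    refine (hasSum_nat_add_iff 2).2 ?_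
    rwa [hc2, sub_add_cancel]
  have hshift' : HasSum (fun i => (-1 : ℝ) ^ i * a i) l := by
    have := hshift.neg
    convert this using 1
    · rfl
    · funext i
      rw [show i + 2 = 2 + i by omega, hFa i]; ring
    · rw [hl]; ring
  have htend : Tendsto (fun m => ∑ i ∈ range m, (-1 : ℝ) ^ i * a i) atTop (𝓝 l) :=
    hshift'.tendsto_sum_nat
  have hsa : StrictAnti a := by
    refine strictAnti_nat_of_succ_lt fun i => ?_
    have := wchB_decr x hx0 hxpi (i + 2) (by omega)
    simpa [ha, show i + 2 + 1 = i + 1 + 2 by omega] using this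
  have hanti : Antitone a := hsa.antitone
  have hIcc : ∀ m : ℕ, 2 ≤ m →
      ∑ k ∈ Finset.Icc 2 m, F k = -∑ i ∈ range (m - 1), (-1 : ℝ) ^ i * a i := by
    intro m hm
    rw [← Finset.Ico_add_one_right_eq_Icc, Finset.sum_Ico_eq_sum_range]
    rw [show m + 1 - 2 = m - 1 by omega, ← Finset.sum_neg_distrib]
    exact Finset.sum_congr rfl fun i _ => by rw [hFa i]
  constructor
  · -- lower bound: -S(2n-1) < -l, i.e. l < S(2n-1)
    rw [show Real.sin x / x - (Real.cos x + 2) / 3 = -l by rw [hl]; ring,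
      hIcc (2 * n) (by omega), neg_lt_neg_iff]
    have h1 : l ≤ ∑ i ∈ range (2 * n + 1), (-1 : ℝ) ^ i * a i :=
      hanti.tendsto_le_alternating_series htend n
    have h2 : ∑ i ∈ range (2 * n + 1), (-1 : ℝ) ^ i * a i
        < ∑ i ∈ range (2 * n - 1), (-1 : ℝ) ^ i * a i := by
      rw [show 2 * n + 1 = (2 * n - 1) + 1 + 1 by omega, Finset.sum_range_succ,
        Finset.sum_range_succ]
      have hodd : Odd (2 * n - 1) := by
        refine ⟨n - 1, by omega⟩
      rw [hodd.neg_one_pow, show (2 * n - 1) + 1 = 2 * n by omega,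
        (even_two_mul n).neg_one_pow]
      have := hsa (show 2 * n - 1 < 2 * n by omega)
      nlinarith
    linarith
  · -- upper bound: -l < -S(2n), i.e. S(2n) < l
    rw [show Real.sin x / x - (Real.cos x + 2) / 3 = -l by rw [hl]; ring,
      hIcc (2 * n + 1) (by omega), show 2 * n + 1 - 1 = 2 * n by omega, neg_lt_neg_iff]
    have h1 : ∑ i ∈ range (2 * (n + 1)), (-1 : ℝ) ^ i * a i ≤ l :=
      hanti.alternating_series_le_tendsto htend (n + 1)
    have h2 : ∑ i ∈ range (2 * n), (-1 : ℝ) ^ i * a i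
        < ∑ i ∈ range (2 * (n + 1)), (-1 : ℝ) ^ i * a i := by
      rw [show 2 * (n + 1) = 2 * n + 1 + 1 by omega, Finset.sum_range_succ,
        Finset.sum_range_succ]
      rw [(even_two_mul n).neg_one_pow, (Odd.neg_one_pow ⟨n, by omega⟩ :
        (-1 : ℝ) ^ (2 * n + 1) = -1)]
      have := hsa (show 2 * n < 2 * n + 1 by omega)
      nlinarith
    linarith
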